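/- The sum-rate function g(L) = ((T − L)/T) · Σ_{k ∈ K} log₂( 1 + β_k² / ( c·(β_k + s/(L − K₀)) ) ), regarded as a function of a real variable L, is strictly concave on the open interval (K₀, T). -/

import Mathlib

lemma aux_strictConcaveOn {D : Set ℝ} (hD : Convex ℝ D) (hDo : IsOpen D)
    (f f' f'' : ℝ → ℝ)
    (h1 : ∀ x ∈ D, HasDerivAt f (f' x) x)
    (h2 : ∀ x ∈ D, HasDerivAt f' (f'' x) x)
    (h3 : ∀ x ∈ D, f'' x < 0) :
    StrictConcaveOn ℝ D f := by
  refine strictConcaveOn_of_deriv2_neg hD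
    (fun x hx => (h1 x hx).continuousAt.continuousWithinAt) (fun x hx => ?_)
  rw [hDo.interior_eq] at hx
  have hd : f' =ᶠ[nhds x] deriv f := by
    filter_upwards [hDo.mem_nhds hx] with y hy using ((h1 y hy).deriv).symm
  have h : HasDerivAt (deriv f) (f'' x) x := (h2 x hx).congr_of_eventuallyEq hd.symm
  have hh : deriv (deriv f) x = f'' x := h.deriv
  simpa [Function.iterate_succ, hh] using h3 x hx

noncomputable def Fa (T K₀ a b d L : ℝ) : ℝ :=
  (T - L) * (Real.log (a * (L - K₀) + d) - Real.log (b * (L - K₀) + d))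

noncomputable def Fa' (T K₀ a b d L : ℝ) : ℝ :=
  -(Real.log (a * (L - K₀) + d) - Real.log (b * (L - K₀) + d)) +
    (T - L) * (a / (a * (L - K₀) + d) - b / (b * (L - K₀) + d))

noncomputable def Fa'' (T K₀ a b d L : ℝ) : ℝ :=
  -2 * (a / (a * (L - K₀) + d) - b / (b * (L - K₀) + d)) +
    (T - L) * (b ^ 2 / (b * (L - K₀) + d) ^ 2 - a ^ 2 / (a * (L - K₀) + d) ^ 2)

lemma hu_deriv (K₀ a d L : ℝ) : HasDerivAt (fun L => a * (L - K₀) + d) a L := by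
  simpa using (((hasDerivAt_id L).sub_const K₀).const_mul a).add_const d

lemma Fa_deriv {T K₀ a b d L : ℝ} (ha : 0 < a) (hb : 0 < b) (hd : 0 < d) (hx : K₀ < L) :
    HasDerivAt (Fa T K₀ a b d) (Fa' T K₀ a b d L) L := by
  have hxp : 0 < L - K₀ := sub_pos.2 hx
  have hup : 0 < a * (L - K₀) + d := by positivity
  have hvp : 0 < b * (L - K₀) + d := by positivity
  have hlu : HasDerivAt (fun L => Real.log (a * (L - K₀) + d)) (a / (a * (L - K₀) + d)) L :=
    (hu_deriv K₀ a d L).log hup.ne'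
  have hlv : HasDerivAt (fun L => Real.log (b * (L - K₀) + d)) (b / (b * (L - K₀) + d)) L :=
    (hu_deriv K₀ b d L).log hvp.ne'
  have hTL : HasDerivAt (fun L : ℝ => T - L) (-1) L := by
    simpa using (hasDerivAt_const L T).fun_sub (hasDerivAt_id L)
  have := hTL.fun_mul (hlu.fun_sub hlv)
  unfold Fa Fa'
  refine this.congr_deriv ?_
  ring

lemma Fa'_deriv {T K₀ a b d L : ℝ} (ha : 0 < a) (hb : 0 < b) (hd : 0 < d) (hx : K₀ < L) :
    HasDerivAt (Fa' T K₀ a b d) (Fa'' T K₀ a b d L) L := by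
  have hxp : 0 < L - K₀ := sub_pos.2 hx
  have hup : 0 < a * (L - K₀) + d := by positivity
  have hvp : 0 < b * (L - K₀) + d := by positivity
  have hlu : HasDerivAt (fun L => Real.log (a * (L - K₀) + d)) (a / (a * (L - K₀) + d)) L :=
    (hu_deriv K₀ a d L).log hup.ne'
  have hlv : HasDerivAt (fun L => Real.log (b * (L - K₀) + d)) (b / (b * (L - K₀) + d)) L :=
    (hu_deriv K₀ b d L).log hvp.ne'
  have hqu : HasDerivAt (fun L => a / (a * (L - K₀) + d))
      ((0 * (a * (L - K₀) + d) - a * a) / (a * (L - K₀) + d) ^ 2) L :=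
    (hasDerivAt_const L a).div (hu_deriv K₀ a d L) hup.ne'
  have hqv : HasDerivAt (fun L => b / (b * (L - K₀) + d))
      ((0 * (b * (L - K₀) + d) - b * b) / (b * (L - K₀) + d) ^ 2) L :=
    (hasDerivAt_const L b).div (hu_deriv K₀ b d L) hvp.ne'
  have hTL : HasDerivAt (fun L : ℝ => T - L) (-1) L := by
    simpa using (hasDerivAt_const L T).fun_sub (hasDerivAt_id L)
  have := ((hlu.fun_sub hlv).fun_neg).fun_add (hTL.fun_mul (hqu.fun_sub hqv))
  unfold Fa' Fa''
  refine this.congr_deriv ?_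
  have hu2 : (a * (L - K₀) + d) ^ 2 ≠ 0 := by positivity
  have hv2 : (b * (L - K₀) + d) ^ 2 ≠ 0 := by positivity
  field_simp
  ring

lemma Fa''_neg {T K₀ a b d L : ℝ} (hb : 0 < b) (hba : b < a) (hd : 0 < d)
    (hx : K₀ < L) (hLT : L < T) : Fa'' T K₀ a b d L < 0 := by
  have ha : 0 < a := hb.trans hba
  have hxp : 0 < L - K₀ := sub_pos.2 hx
  have hup : 0 < a * (L - K₀) + d := by positivity
  have hvp : 0 < b * (L - K₀) + d := by positivity
  have hG' : b / (b * (L - K₀) + d) < a / (a * (L - K₀) + d) := by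
    rw [div_lt_div_iff₀ hvp hup]; nlinarith
  have h1 : b * (a * (L - K₀) + d) ≤ a * (b * (L - K₀) + d) := by nlinarith
  have h2 : 0 ≤ b * (a * (L - K₀) + d) := by positivity
  have hG'' : b ^ 2 / (b * (L - K₀) + d) ^ 2 ≤ a ^ 2 / (a * (L - K₀) + d) ^ 2 := by
    rw [div_le_div_iff₀ (by positivity) (by positivity)]
    nlinarith [mul_le_mul h1 h1 h2 (le_of_lt (by positivity : (0:ℝ) < a * (b * (L - K₀) + d)))]
  have hTLpos : 0 < T - L := sub_pos.2 hLT
  have hterm : (T - L) * (b ^ 2 / (b * (L - K₀) + d) ^ 2 - a ^ 2 / (a * (L - K₀) + d) ^ 2) ≤ 0 :=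
    mul_nonpos_of_nonneg_of_nonpos hTLpos.le (by linarith)
  unfold Fa''
  nlinarith

/-- The sum-rate function
`g(L) = ((T-L)/T) Σ_k log₂( 1 + β_k² / ( c (β_k + s/(L-K₀)) ) )`
is strictly concave on the open interval `(K₀, T)`. -/
theorem sum_rate_strictly_concave_in_pilot_length
    {ι : Type*} [Fintype ι] [Nonempty ι] (β : ι → ℝ) (hβ : ∀ k, 0 < β k)
    (T K₀ c s : ℝ) (hT : 0 < T) (hK₀ : 0 ≤ K₀) (hK₀T : K₀ < T)
    (hc : 0 < c) (hs : 0 < s) :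
    StrictConcaveOn ℝ (Set.Ioo K₀ T)
      (fun L : ℝ => ((T - L) / T) *
        ∑ k : ι, Real.logb 2 (1 + (β k) ^ 2 / (c * (β k + s / (L - K₀))))) := by
  have hlog2 : 0 < Real.log 2 := Real.log_pos (by norm_num)
  set C : ℝ := 1 / (T * Real.log 2) with hCdef
  have hC : 0 < C := by positivity
  -- strict concavity of the explicit form
  have key : StrictConcaveOn ℝ (Set.Ioo K₀ T)
      (fun L : ℝ => ∑ k : ι, C * Fa T K₀ (c * β k + (β k) ^ 2) (c * β k) (c * s) L) := by
    apply aux_strictConcaveOn (convex_Ioo K₀ T) isOpen_Ioo _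
      (fun L => ∑ k : ι, C * Fa' T K₀ (c * β k + (β k) ^ 2) (c * β k) (c * s) L)
      (fun L => ∑ k : ι, C * Fa'' T K₀ (c * β k + (β k) ^ 2) (c * β k) (c * s) L)
    · intro x hx
      exact HasDerivAt.fun_sum fun k _ =>
        (Fa_deriv (by nlinarith [hβ k, pow_pos (hβ k) 2]) (mul_pos hc (hβ k))
          (mul_pos hc hs) hx.1).const_mul C
    · intro x hx
      exact HasDerivAt.fun_sum fun k _ =>
        (Fa'_deriv (by nlinarith [hβ k, pow_pos (hβ k) 2]) (mul_pos hc (hβ k))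
          (mul_pos hc hs) hx.1).const_mul C
    · intro x hx
      apply Finset.sum_neg (fun k _ => ?_) Finset.univ_nonempty
      have := Fa''_neg (T := T) (K₀ := K₀) (a := c * β k + (β k) ^ 2) (b := c * β k)
        (d := c * s) (mul_pos hc (hβ k)) (by nlinarith [pow_pos (hβ k) 2])
        (mul_pos hc hs) hx.1 hx.2
      exact mul_neg_of_pos_of_neg hC this
  -- transfer along equality on the set
  have heq : ∀ z ∈ Set.Ioo K₀ T,
      ((T - z) / T) * ∑ k : ι, Real.logb 2 (1 + (β k) ^ 2 / (c * (β k + s / (z - K₀)))) =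
      ∑ k : ι, C * Fa T K₀ (c * β k + (β k) ^ 2) (c * β k) (c * s) z := by
    intro z hz
    have hxp : 0 < z - K₀ := sub_pos.2 hz.1
    rw [Finset.mul_sum]
    refine Finset.sum_congr rfl fun k _ => ?_
    have hbk := hβ k
    have hup : 0 < (c * β k + (β k) ^ 2) * (z - K₀) + c * s := by positivity
    have hvp : 0 < c * β k * (z - K₀) + c * s := by positivity
    have hden : 0 < β k + s / (z - K₀) := by positivity
    have hden' : c * (β k + s / (z - K₀)) ≠ 0 := (mul_pos hc hden).ne'
    have harg : 1 + (β k) ^ 2 / (c * (β k + s / (z - K₀))) =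
        ((c * β k + (β k) ^ 2) * (z - K₀) + c * s) / (c * β k * (z - K₀) + c * s) := by
      rw [eq_div_iff hvp.ne']
      field_simp
      ring
    rw [harg, Real.logb, Real.log_div hup.ne' hvp.ne', Fa,
      div_mul_div_comm, hCdef, div_mul_eq_mul_div, one_mul]
  refine ⟨key.1, fun x hx y hy hne a b ha hb hab => ?_⟩
  have hmem : a • x + b • y ∈ Set.Ioo K₀ T := key.1 hx hy ha.le hb.le hab
  dsimp only
  rw [heq x hx, heq y hy, heq _ hmem]
  exact key.2 hx hy hne ha hb hab
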